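/- Let q : ℝ² → 𝕋² be the quotient map onto the flat two-dimensional torus, and let (p,k) ∈ ℤ² be a nonzero integer vector with gcd(|p|,|k|) = 1. Then the image q({t·(p,k) : t ∈ ℝ}) of the line through the origin with direction (p,k) is a closed subset of 𝕋², and its one-dimensional Hausdorff measure equals √(p² + k²). -/

import Mathlib

open MeasureTheory

noncomputable section

/-- The integer lattice `ℤ²` inside Euclidean space `ℝ²`. -/
abbrev torusLattice (N : ℕ) : AddSubgroup (EuclideanSpace ℝ (Fin N)) :=
  (Submodule.span ℤ (Set.range ((EuclideanSpace.basisFun (Fin N) ℝ).toBasis))).toAddSubgroup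

instance (N : ℕ) : IsClosed ((torusLattice N : Set (EuclideanSpace ℝ (Fin N)))) :=
  AddSubgroup.isClosed_of_discrete

/-- The flat torus `𝕋^N = ℝ^N / ℤ^N`, equipped with the quotient metric. -/
abbrev Torus (N : ℕ) := EuclideanSpace ℝ (Fin N) ⧸ torusLattice N

/-- The canonical quotient map `ℝ^N → 𝕋^N`. -/
abbrev torusQuot (N : ℕ) : EuclideanSpace ℝ (Fin N) → Torus N := QuotientAddGroup.mk

lemma mem_torusLattice_iff (w : EuclideanSpace ℝ (Fin 2)) :
    w ∈ torusLattice 2 ↔ ∀ i, ∃ m : ℤ, w i = m := by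
  rw [Submodule.mem_toAddSubgroup, Module.Basis.mem_span_iff_repr_mem]
  simp only [OrthonormalBasis.coe_toBasis_repr_apply, EuclideanSpace.basisFun_repr,
    Set.mem_range, algebraMap_int_eq, Int.coe_castRingHom]
  exact ⟨fun h i => (h i).imp fun m hm => hm.symm, fun h i => (h i).imp fun m hm => hm.symm⟩

lemma norm_lattice_ge (z : EuclideanSpace ℝ (Fin 2)) (hz : z ∈ torusLattice 2) (h0 : z ≠ 0) :
    1 ≤ ‖z‖ := by
  rw [mem_torusLattice_iff] at hz
  have : ∃ i, z i ≠ 0 := by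
    by_contra h
    push_neg at h
    exact h0 (by ext i; simp [h i])
  obtain ⟨i, hi⟩ := this
  obtain ⟨m, hm⟩ := hz i
  have hm0 : m ≠ 0 := by rintro rfl; simp [hm] at hi
  have h1 : (1:ℝ) ≤ |z i| := by
    rw [hm, ← Int.cast_abs]
    exact_mod_cast Int.one_le_abs hm0
  calc (1:ℝ) ≤ |z i| := h1
    _ ≤ ‖z‖ := by
      rw [EuclideanSpace.norm_eq, ← Real.sqrt_sq_eq_abs]
      apply Real.sqrt_le_sqrt
      have := Finset.single_le_sum (f := fun j => ‖z j‖^2)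
        (fun j _ => by positivity) (Finset.mem_univ i)
      simpa [Real.norm_eq_abs, sq_abs] using this

lemma lip_torusQuot : LipschitzWith 1 (torusQuot 2) := by
  apply LipschitzWith.of_dist_le_mul
  intro x y
  rw [dist_eq_norm, ← QuotientAddGroup.mk_sub, dist_eq_norm, NNReal.coe_one, one_mul]
  exact QuotientAddGroup.norm_mk_le_norm

lemma dist_torusQuot_eq {x y : EuclideanSpace ℝ (Fin 2)} (h : dist x y < 1/2) :
    dist (torusQuot 2 x) (torusQuot 2 y) = dist x y := by
  rw [dist_eq_norm, ← QuotientAddGroup.mk_sub, QuotientAddGroup.norm_mk, dist_eq_norm]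
  apply le_antisymm
  · simpa using Metric.infDist_le_dist_of_mem
      (by simp : (0:EuclideanSpace ℝ (Fin 2)) ∈ (torusLattice 2 : Set _))
  · rw [Metric.infDist_eq_iInf]
    have : Nonempty (torusLattice 2 : Set (EuclideanSpace ℝ (Fin 2))) := ⟨⟨0, by simp⟩⟩
    apply le_ciInf
    rintro ⟨z, hz⟩
    rcases eq_or_ne z 0 with rfl | hz0
    · simp
    · have h1 : (1:ℝ) ≤ ‖z‖ := norm_lattice_ge z hz hz0
      rw [dist_eq_norm] at h
      have hd : dist (x - y) z = ‖x - y - z‖ := dist_eq_norm _ _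
      rw [hd]
      have h2 := (abs_le.mp (abs_norm_sub_norm_le (x - y) z)).1
      linarith

lemma hausdorff_image_of_small (s : Set (EuclideanSpace ℝ (Fin 2)))
    (hs : ∀ x ∈ s, ∀ y ∈ s, dist x y < 1/2) :
    μH[1] (torusQuot 2 '' s) = μH[1] s := by
  have hiso : Isometry (fun x : s => torusQuot 2 x.1) := by
    apply Isometry.of_dist_eq
    intro a b
    rw [dist_torusQuot_eq (hs _ a.2 _ b.2), Subtype.dist_eq]
  have h1 := hiso.hausdorffMeasure_image (Or.inl zero_le_one) Set.univ
  have h2 := (isometry_subtype_coe :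
    Isometry ((↑) : s → EuclideanSpace ℝ (Fin 2))).hausdorffMeasure_image
    (Or.inl zero_le_one) Set.univ
  rw [Set.image_univ] at h1 h2
  rw [Subtype.range_coe] at h2
  have hr : Set.range (fun x : s => torusQuot 2 x.1) = torusQuot 2 '' s := by
    rw [← Set.image_univ, ← Set.image_image (torusQuot 2) Subtype.val, Set.image_univ,
      Subtype.range_coe]
  rw [hr] at h1
  rw [h1, h2]

lemma quot_eq_iff (p k : ℤ) (hgcd : Int.gcd p k = 1)
    (v : EuclideanSpace ℝ (Fin 2))
    (hv : v = (WithLp.equiv 2 (Fin 2 → ℝ)).symm ![(p : ℝ), (k : ℝ)]) (t s : ℝ) :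
    torusQuot 2 (t • v) = torusQuot 2 (s • v) ↔ ∃ m : ℤ, t - s = m := by
  have hv0 : v 0 = (p:ℝ) := by rw [hv]; rfl
  have hv1 : v 1 = (k:ℝ) := by rw [hv]; rfl
  rw [QuotientAddGroup.eq_iff_sub_mem, ← sub_smul, mem_torusLattice_iff]
  have happ : ∀ (c : ℝ) (i : Fin 2), (c • v) i = c * v i := fun c i => rfl
  constructor
  · intro h
    obtain ⟨m₁, hm₁⟩ := h 0
    obtain ⟨m₂, hm₂⟩ := h 1
    rw [happ, hv0] at hm₁
    rw [happ, hv1] at hm₂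
    have hbez : ((Int.gcd p k : ℤ) : ℝ) = p * Int.gcdA p k + k * Int.gcdB p k := by
      exact_mod_cast congrArg (Int.cast : ℤ → ℝ) (Int.gcd_eq_gcd_ab p k)
    rw [hgcd] at hbez
    refine ⟨m₁ * Int.gcdA p k + m₂ * Int.gcdB p k, ?_⟩
    push_cast at hbez ⊢
    linear_combination (Int.gcdA p k : ℝ) * hm₁ + (Int.gcdB p k : ℝ) * hm₂ + (t - s) * hbez
  · rintro ⟨m, hm⟩
    intro i
    refine ⟨m * ![p, k] i, ?_⟩
    have hvi : v i = (![(p:ℝ), (k:ℝ)]) i := by rw [hv]; rfl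
    rw [happ, hvi, hm]
    fin_cases i <;> simp

/-- Let `(p, k) ∈ ℤ²` be nonzero with `gcd (|p|, |k|) = 1`. Then the image in the flat torus
`𝕋²` of the line through the origin with direction `(p, k)` is closed, and its one-dimensional
Hausdorff measure equals `√(p² + k²)`. -/
theorem image_rational_line_closed_and_length
    (p k : ℤ) (hpk : (p, k) ≠ (0, 0)) (hgcd : Int.gcd p k = 1)
    (v : EuclideanSpace ℝ (Fin 2))
    (hv : v = (WithLp.equiv 2 (Fin 2 → ℝ)).symm ![(p : ℝ), (k : ℝ)])
    (L : Set (EuclideanSpace ℝ (Fin 2))) (hL : L = Set.range fun t : ℝ => t • v) :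
    IsClosed (torusQuot 2 '' L) ∧
      μH[1] (torusQuot 2 '' L) = ENNReal.ofReal (Real.sqrt ((p : ℝ) ^ 2 + (k : ℝ) ^ 2)) := by
  subst hL
  have hv0 : v 0 = (p:ℝ) := by rw [hv]; rfl
  have hv1 : v 1 = (k:ℝ) := by rw [hv]; rfl
  have hnorm : ‖v‖ = Real.sqrt ((p:ℝ)^2 + (k:ℝ)^2) := by
    rw [EuclideanSpace.norm_eq, Fin.sum_univ_two, hv0, hv1]
    simp [Real.norm_eq_abs, sq_abs]
  have hkey : ∀ t s : ℝ, torusQuot 2 (t • v) = torusQuot 2 (s • v) ↔ ∃ m : ℤ, t - s = m :=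
    quot_eq_iff p k hgcd v hv
  have hc1 : (1:ℝ) ≤ ‖v‖ := by
    rw [hnorm]
    have hne : p ≠ 0 ∨ k ≠ 0 := by
      by_contra h
      push_neg at h
      exact hpk (by rw [h.1, h.2])
    have h1 : (1:ℤ) ≤ p^2 + k^2 := by
      rcases hne with h | h
      · nlinarith [sq_nonneg k, Int.one_le_abs h, sq_abs p, abs_nonneg p,
          mul_le_mul (Int.one_le_abs h) (Int.one_le_abs h) zero_le_one (abs_nonneg p)]
      · nlinarith [sq_nonneg p, Int.one_le_abs h, sq_abs k, abs_nonneg k,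
          mul_le_mul (Int.one_le_abs h) (Int.one_le_abs h) zero_le_one (abs_nonneg k)]
    have h1' : (1:ℝ) ≤ (p:ℝ)^2 + (k:ℝ)^2 := by exact_mod_cast h1
    nlinarith [Real.sq_sqrt (by linarith : (0:ℝ) ≤ (p:ℝ)^2 + (k:ℝ)^2),
      Real.sqrt_nonneg ((p:ℝ)^2 + (k:ℝ)^2)]
  set c := ‖v‖ with hc_def
  set n : ℕ := ⌈2*c⌉₊ + 1 with hn_def
  have hn2 : 2*c < n := by
    have := Nat.le_ceil (2*c)
    have : 2*c ≤ (⌈2*c⌉₊ : ℝ) := this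
    push_cast [hn_def]
    linarith
  have hnR : (0:ℝ) < n := by positivity
  have hn_gt2 : (2:ℝ) < n := by linarith
  have hdist : ∀ t s : ℝ, dist (t • v) (s • v) = |t - s| * c := by
    intro t s
    rw [dist_eq_norm, ← sub_smul, norm_smul, Real.norm_eq_abs]
  -- the pieces
  set P : ℕ → Set (EuclideanSpace ℝ (Fin 2)) :=
    fun i => (fun t : ℝ => t • v) '' Set.Ico ((i:ℝ)/n) (((i:ℝ)+1)/n) with hP_def
  have hsmall : ∀ i : ℕ, ∀ x ∈ P i, ∀ y ∈ P i, dist x y < 1/2 := by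
    rintro i _ ⟨t, ht, rfl⟩ _ ⟨s, hs, rfl⟩
    rw [hdist]
    have e : ((i:ℝ)+1)/n - (i:ℝ)/n = 1/n := by field_simp; ring
    have h1 : |t - s| < 1/n := by
      rw [abs_sub_lt_iff]
      constructor <;> linarith [ht.1, ht.2, hs.1, hs.2]
    calc |t - s| * c < (1/n) * c := by
          apply mul_lt_mul_of_pos_right h1 (by linarith)
      _ < 1/2 := by
          rw [div_mul_eq_mul_div, one_mul, div_lt_iff₀ hnR]
          linarith
  have hpiece : ∀ i : ℕ, μH[1] (torusQuot 2 '' P i) = ENNReal.ofReal (c * (1/n)) := by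
    intro i
    rw [hausdorff_image_of_small _ (hsmall i)]
    simp only [hP_def]
    rw [MeasureTheory.hausdorffMeasure_smul_right_image,
      MeasureTheory.hausdorffMeasure_real, Real.volume_Ico]
    have e : ((i:ℝ)+1)/n - (i:ℝ)/n = 1/n := by field_simp; ring
    rw [e, ENNReal.smul_def, smul_eq_mul, ← ENNReal.ofReal_coe_nnreal, coe_nnnorm,
      ← ENNReal.ofReal_mul (norm_nonneg v)]
  have hinj : ∀ t s : ℝ, |t - s| < 1 → torusQuot 2 (t • v) = torusQuot 2 (s • v) → t = s := by
    intro t s h1 h2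
    obtain ⟨m, hm⟩ := (hkey t s).mp h2
    rw [hm] at h1
    have hm1 : |m| < (1:ℤ) := by
      rw [← Int.cast_abs] at h1
      exact_mod_cast h1
    have : m = 0 := Int.abs_lt_one_iff.mp hm1
    rw [this] at hm
    push_cast at hm
    linarith
  have hIccIm : torusQuot 2 '' (Set.range fun t : ℝ => t • v)
      = torusQuot 2 '' ((fun t : ℝ => t • v) '' Set.Icc 0 1) := by
    apply Set.Subset.antisymm
    · rintro x ⟨w, ⟨t, rfl⟩, rfl⟩
      refine ⟨Int.fract t • v,
        ⟨Int.fract t, ⟨Int.fract_nonneg t, (Int.fract_lt_one t).le⟩, rfl⟩, ?_⟩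
      exact (hkey _ _).mpr ⟨-⌊t⌋, by rw [Int.fract]; push_cast; ring⟩
    · rintro x ⟨w, ⟨t, _, rfl⟩, rfl⟩
      exact ⟨t • v, ⟨t, rfl⟩, rfl⟩
  have hclosed : IsClosed (torusQuot 2 '' (Set.range fun t : ℝ => t • v)) := by
    rw [hIccIm]
    exact (((isCompact_Icc).image (continuous_id.smul continuous_const)).image
      lip_torusQuot.continuous).isClosed
  have hmeas : ∀ i : ℕ, MeasurableSet (torusQuot 2 '' P i) := by
    intro i
    have hcomp : IsCompact (torusQuot 2 ''
        ((fun t : ℝ => t • v) '' Set.Icc ((i:ℝ)/n) (((i:ℝ)+1)/n))) :=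
      ((isCompact_Icc).image (continuous_id.smul continuous_const)).image
        lip_torusQuot.continuous
    have e : ((i:ℝ)+1)/n - (i:ℝ)/n = 1/n := by field_simp; ring
    have h1n : (1:ℝ)/n < 1 := by rw [div_lt_one hnR]; linarith
    have heq : torusQuot 2 '' P i
        = (torusQuot 2 '' ((fun t : ℝ => t • v) '' Set.Icc ((i:ℝ)/n) (((i:ℝ)+1)/n)))
          \ {torusQuot 2 ((((i:ℝ)+1)/n) • v)} := by
      apply Set.Subset.antisymm
      · rintro x ⟨w, ⟨t, ht, rfl⟩, rfl⟩
        refine ⟨⟨t • v, ⟨t, ⟨ht.1, ht.2.le⟩, rfl⟩, rfl⟩, ?_⟩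
        intro hx
        rw [Set.mem_singleton_iff] at hx
        have habs : |t - ((i:ℝ)+1)/n| < 1 := by
          rw [abs_lt]
          constructor <;> linarith [ht.1, ht.2]
        have := hinj t (((i:ℝ)+1)/n) habs hx
        linarith [ht.2]
      · rintro x ⟨⟨w, ⟨t, ht, rfl⟩, rfl⟩, hne⟩
        rcases eq_or_ne t (((i:ℝ)+1)/n) with rfl | htne
        · exact absurd rfl hne
        · exact ⟨t • v, ⟨t, ⟨ht.1, lt_of_le_of_ne ht.2 htne⟩, rfl⟩, rfl⟩
    rw [heq]
    exact hcomp.measurableSet.diff isClosed_singleton.measurableSet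
  have hdisj : Pairwise (Function.onFun Disjoint fun i : Fin n => torusQuot 2 '' P i) := by
    intro i j hij
    rw [Function.onFun, Set.disjoint_left]
    rintro x ⟨w, ⟨t, ht, rfl⟩, rfl⟩ ⟨w', ⟨s, hs, rfl⟩, hq⟩
    have hib : ((i:ℕ):ℝ)+1 ≤ n := by exact_mod_cast Nat.succ_le_of_lt i.2
    have hjb : ((j:ℕ):ℝ)+1 ≤ n := by exact_mod_cast Nat.succ_le_of_lt j.2
    have ht0 : 0 ≤ t := le_trans (by positivity) ht.1
    have ht1 : t < 1 := lt_of_lt_of_le ht.2 (by rw [div_le_one hnR]; exact hib)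
    have hs0 : 0 ≤ s := le_trans (by positivity) hs.1
    have hs1 : s < 1 := lt_of_lt_of_le hs.2 (by rw [div_le_one hnR]; exact hjb)
    have hts : s = t := hinj s t (by rw [abs_lt]; constructor <;> linarith) hq
    subst hts
    apply hij
    have e1 : ((i:ℕ):ℝ) ≤ s * n := (div_le_iff₀ hnR).mp ht.1
    have e2 : s * n < ((i:ℕ):ℝ) + 1 := (lt_div_iff₀ hnR).mp ht.2
    have e3 : ((j:ℕ):ℝ) ≤ s * n := (div_le_iff₀ hnR).mp hs.1
    have e4 : s * n < ((j:ℕ):ℝ) + 1 := (lt_div_iff₀ hnR).mp hs.2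
    have hij1 : ((i:ℕ):ℝ) < (j:ℕ) + 1 := by linarith
    have hij2 : ((j:ℕ):ℝ) < (i:ℕ) + 1 := by linarith
    have hij1' : (i:ℕ) < (j:ℕ) + 1 := by exact_mod_cast hij1
    have hij2' : (j:ℕ) < (i:ℕ) + 1 := by exact_mod_cast hij2
    exact Fin.ext (by omega)
  have hdecomp : torusQuot 2 '' (Set.range fun t : ℝ => t • v)
      = ⋃ i : Fin n, torusQuot 2 '' P i := by
    apply Set.Subset.antisymm
    · rintro x ⟨w, ⟨t, rfl⟩, rfl⟩
      set s := Int.fract t with hs_def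
      have hs0 : 0 ≤ s := Int.fract_nonneg t
      have hs1 : s < 1 := Int.fract_lt_one t
      set i : ℕ := ⌊s * n⌋₊ with hi_def
      have hin : i < n := by
        have h1 : s * (n:ℝ) < n := by nlinarith
        exact (Nat.floor_lt (by positivity)).mpr (by exact_mod_cast h1)
      refine Set.mem_iUnion.mpr ⟨⟨i, hin⟩, s • v, ⟨s, ⟨?_, ?_⟩, rfl⟩, ?_⟩
      · rw [div_le_iff₀ hnR]
        exact Nat.floor_le (by positivity)
      · rw [lt_div_iff₀ hnR]
        exact Nat.lt_floor_add_one (s * n)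
      · exact (hkey s t).mpr ⟨-⌊t⌋, by rw [hs_def, Int.fract]; push_cast; ring⟩
    · rw [Set.iUnion_subset_iff]
      intro i
      apply Set.image_mono
      rintro w ⟨t, _, rfl⟩
      exact ⟨t, rfl⟩
  refine ⟨hclosed, ?_⟩
  rw [hdecomp, measure_iUnion hdisj (fun i => hmeas i), tsum_fintype]
  simp only [hpiece]
  rw [Finset.sum_const, Finset.card_univ, Fintype.card_fin, nsmul_eq_mul,
    ← ENNReal.ofReal_natCast n, ← ENNReal.ofReal_mul (by positivity), ← hnorm]
  congr 1
  field_simp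

end
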